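/- Cancellation for lower reals: given lower reals u₁,…,u_n and v, the equation u₁ + ⋯ + u_n + x = v has at most one solution x ∈ ℝ_l satisfying u_i ≤ x for all i. -/

import Mathlib

/-- The initial σ-frame `𝕊`, as the least subset of the propositions `Ω = Prop`
containing `False` and `True` and closed under joins of increasing ω-chains
(equivalently, the image of the free ω-cpo completion of `𝔹 = {⊥ ≤ ⊤}` in `Ω`). -/
inductive InS : Prop → Prop
  | bot : InS False
  | top : InS True
  | sup (c : ℕ → Prop) (mono : ∀ n, c n → c (n + 1)) (h : ∀ n, InS (c n)) :
      InS (∃ n, c n)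

theorem InS.of_decidable (p : Prop) [Decidable p] : InS p := by
  by_cases h : p
  · rw [eq_true h]; exact InS.top
  · rw [eq_false h]; exact InS.bot

/-- A lower real: an `𝕊`-valued, inhabited, rounded, downward-closed cut of rationals. -/
structure LowerReal where
  cut : ℚ → Prop
  inS : ∀ q, InS (cut q)
  inhab : ∃ q, cut q
  rounded : ∀ q, cut q → ∃ q', q < q' ∧ cut q'
  lower : ∀ q q', q < q' → cut q' → cut q

instance : Preorder LowerReal where
  le L₁ L₂ := ∀ q, L₁.cut q → L₂.cut q
  le_refl _ _ h := h
  le_trans _ _ _ h₁ h₂ q hq := h₂ q (h₁ q hq)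

/-- The lower real associated to a rational number. -/
def ratLR (q : ℚ) : LowerReal where
  cut p := p < q
  inS _ := InS.of_decidable _
  inhab := ⟨q - 1, by linarith⟩
  rounded p hp := ⟨(p + q) / 2, by constructor <;> linarith⟩
  lower _ _ h h' := lt_trans h h'

/-- The non-negative rationals. -/
abbrev QPlus := {q : ℚ // 0 ≤ q}

/-- The non-negative lower reals `ℝ_l⁺`. -/
abbrev NNLowerReal := {L : LowerReal // ∀ q : ℚ, q < 0 → L.cut q}

/-- The non-negative lower real associated to a non-negative rational. -/
def ratNN (q : QPlus) : NNLowerReal :=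
  ⟨ratLR q.1, fun _ hp => lt_of_lt_of_le hp q.2⟩

def zeroNN : NNLowerReal := ratNN ⟨0, le_refl 0⟩
def oneNN : NNLowerReal := ratNN ⟨1, by norm_num⟩

section Aux

private lemma sum_le_of_forall_lt (l : List ℚ) (b : ℚ) (h : ∀ a ∈ l, a < b) :
    l.sum ≤ l.length * b := by
  induction l with
  | nil => simp
  | cons a l ih =>
    simp only [List.sum_cons, List.length_cons] at *
    have h1 : a < b := h a (by simp)
    have h2 : l.sum ≤ l.length * b := ih fun a ha => h a (by simp [ha])
    push_cast
    nlinarith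

private lemma forall₂_mem_right {R : LowerReal → ℚ → Prop} :
    ∀ {l : List LowerReal} {qs : List ℚ}, List.Forall₂ R l qs →
      ∀ a ∈ qs, ∃ L ∈ l, R L a := by
  intro l qs h
  induction h with
  | nil => simp
  | cons hR _ ih =>
    intro a ha
    rcases List.mem_cons.1 ha with rfl | ha
    · exact ⟨_, by simp, hR⟩
    · rcases ih a ha with ⟨L, hL, hRL⟩
      exact ⟨L, by simp [hL], hRL⟩

private lemma fold_cut_iff (add : LowerReal → LowerReal → LowerReal)
    (hadd : ∀ L₁ L₂ q, (add L₁ L₂).cut q ↔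
      ∃ q₁ q₂, L₁.cut q₁ ∧ L₂.cut q₂ ∧ q₁ + q₂ = q)
    (l : List LowerReal) (w : LowerReal) (m : ℚ) :
    (l.foldr add w).cut m ↔
      ∃ qs t, List.Forall₂ (fun L a => L.cut a) l qs ∧ w.cut t ∧ qs.sum + t = m := by
  induction l generalizing m with
  | nil =>
    constructor
    · intro h; exact ⟨[], m, List.Forall₂.nil, h, by simp⟩
    · rintro ⟨qs, t, hf, ht, hs⟩
      rcases List.forall₂_nil_left_iff.1 hf with rfl
      simp only [List.sum_nil, zero_add] at hs
      exact hs ▸ ht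
  | cons L l ih =>
    rw [List.foldr_cons, hadd]
    constructor
    · rintro ⟨q₁, q₂, h₁, h₂, rfl⟩
      rcases (ih q₂).1 h₂ with ⟨qs, t, hf, ht, hs⟩
      exact ⟨q₁ :: qs, t, List.Forall₂.cons h₁ hf, ht, by simp [← hs]; ring⟩
    · rintro ⟨qs, t, hf, ht, hs⟩
      rcases List.forall₂_cons_left_iff.1 hf with ⟨a, qs', ha, hf', rfl⟩
      exact ⟨a, qs'.sum + t, ha, (ih _).2 ⟨qs', t, hf', ht, rfl⟩, by simp at hs; linarith⟩

private lemma le_aux (add : LowerReal → LowerReal → LowerReal)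
    (hadd : ∀ L₁ L₂ q, (add L₁ L₂).cut q ↔
      ∃ q₁ q₂, L₁.cut q₁ ∧ L₂.cut q₂ ∧ q₁ + q₂ = q)
    (n : ℕ) (u : Fin n → LowerReal) (v x y : LowerReal)
    (hy : ∀ i, u i ≤ y)
    (hvx : (List.ofFn u).foldr add x = v) (hvy : (List.ofFn u).foldr add y = v) :
    x ≤ y := by
  rcases Nat.eq_zero_or_pos n with rfl | hn
  · have hu : List.ofFn u = [] := by simp
    rw [hu] at hvx hvy
    simp only [List.foldr_nil] at hvx hvy
    rw [hvx, ← hvy]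
  intro q hq
  rcases x.rounded q hq with ⟨q', hqq', hq'⟩
  set δ : ℚ := q' - q with hδ
  have hδpos : 0 < δ := by simp [hδ]; linarith
  -- every element of a decomposition list lies in y's cut
  have hmemy : ∀ qs : List ℚ, List.Forall₂ (fun L a => L.cut a) (List.ofFn u) qs →
      ∀ a ∈ qs, y.cut a := by
    intro qs hf a ha
    rcases forall₂_mem_right hf a ha with ⟨L, hL, hcut⟩
    rcases Set.mem_range.1 (List.mem_ofFn.1 hL) with ⟨i, rfl⟩
    exact hy i a hcut
  have key : ∀ (k : ℕ) (qs : List ℚ),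
      List.Forall₂ (fun L a => L.cut a) (List.ofFn u) qs →
      (n : ℚ) * q' ≤ qs.sum + k * δ → y.cut q := by
    intro k
    induction k with
    | zero =>
      intro qs hf hsum
      have hlen : qs.length = n := by
        have := hf.length_eq; simpa using this.symm
      by_contra hqy
      have hall : ∀ a ∈ qs, a < q' := by
        intro a ha
        by_contra hle
        push_neg at hle
        exact hqy (y.lower q a (lt_of_lt_of_le hqq' hle) (hmemy qs hf a ha))
      have := sum_le_of_forall_lt qs q' hall
      rw [hlen] at this
      -- now n*q' ≤ qs.sum ≤ n*q', so equality; but strictness needed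
      -- qs nonempty since n ≥ 1
      have hne : qs ≠ [] := by
        intro h; rw [h] at hlen; simp at hlen; omega
      rcases List.exists_mem_of_ne_nil qs hne with ⟨a, ha⟩
      -- refine: a < q' and rest sum ≤ (n-1)*q' gives strict
      have : qs.sum < qs.length * q' := by
        rcases (List.mem_iff_append).1 ha with ⟨s, t, rfl⟩
        have h1 : a < q' := hall a ha
        have h2 := sum_le_of_forall_lt s q' (fun b hb => hall b (by simp [hb]))
        have h3 := sum_le_of_forall_lt t q' (fun b hb => hall b (by simp [hb]))
        simp only [List.sum_append, List.sum_cons, List.length_append, List.length_cons]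
        push_cast
        nlinarith
      rw [hlen] at this
      simp only [Nat.cast_zero, zero_mul, add_zero] at hsum
      linarith
    | succ k ih =>
      intro qs hf hsum
      -- qs.sum + q' ∈ v = fold y
      have hv : ((List.ofFn u).foldr add x).cut (qs.sum + q') :=
        (fold_cut_iff add hadd _ x _).2 ⟨qs, q', hf, hq', rfl⟩
      rw [hvx, ← hvy] at hv
      rcases (fold_cut_iff add hadd _ y _).1 hv with ⟨ss, t, hf', ht, hs⟩
      rcases lt_trichotomy q t with hlt | rfl | hgt
      · exact y.lower q t hlt ht
      · exact ht
      · apply ih ss hf'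
        push_cast at hsum ⊢
        have : ss.sum = qs.sum + q' - t := by linarith
        rw [this]
        have : q' - t > δ := by simp [hδ]; linarith
        nlinarith
  -- initial list
  choose r hr using fun i => (u i).inhab
  have hf0 : List.Forall₂ (fun L a => L.cut a) (List.ofFn u) (List.ofFn r) := by
    rw [List.forall₂_iff_get]
    refine ⟨by simp, ?_⟩
    intro i h1 h2
    simp only [List.get_eq_getElem, List.getElem_ofFn]
    exact hr _
  rcases exists_nat_ge ((n * q' - (List.ofFn r).sum) / δ) with ⟨k, hk⟩
  apply key k (List.ofFn r) hf0
  rw [div_le_iff₀ hδpos] at hk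
  linarith

end Aux

/-- cancellation for lower reals: given lower reals `u₁, …, u_n` and
`v`, where addition is the Minkowski sum of lower cuts, the equation
`u₁ + ⋯ + u_n + x = v` has at most one solution `x` with `u_i ≤ x` for all `i`. -/
theorem lower_real_cancellation
    (add : LowerReal → LowerReal → LowerReal)
    (hadd : ∀ L₁ L₂ q, (add L₁ L₂).cut q ↔
      ∃ q₁ q₂, L₁.cut q₁ ∧ L₂.cut q₂ ∧ q₁ + q₂ = q)
    (n : ℕ) (u : Fin n → LowerReal) (v x y : LowerReal)
    (hx : ∀ i, u i ≤ x) (hy : ∀ i, u i ≤ y)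
    (hvx : (List.ofFn u).foldr add x = v) (hvy : (List.ofFn u).foldr add y = v) :
    x = y := by
  have hxy := le_aux add hadd n u v x y hy hvx hvy
  have hyx := le_aux add hadd n u v y x hx hvy hvx
  have hcut : x.cut = y.cut := by
    funext q; exact propext ⟨hxy q, hyx q⟩
  cases x; cases y
  simp_all
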